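/- Let L_Z and L̃_Z be symmetric positive definite and L_Y symmetric positive semidefinite. If ‖L̃_Z − L_Z‖₂ ≤ ε, then the largest generalized eigenvalues satisfy |λ_max(L_Y, L̃_Z) − λ_max(L_Y, L_Z)| ≤ ε ‖L_Y‖₂ / (λ_min(L_Z) · λ_min(L̃_Z)). -/

import Mathlib

open Matrix

/-- The ℓ₂ operator (spectral) norm of a real matrix. -/
noncomputable def specNorm {m n : ℕ} (A : Matrix (Fin m) (Fin n) ℝ) : ℝ :=
  ‖LinearMap.toContinuousLinearMap (Matrix.toEuclideanLin A)‖

/-- The largest generalized eigenvalue of the pair `(A, B)`, as a supremum of Rayleigh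
quotients. -/
noncomputable def genLamMax {N : ℕ} (A B : Matrix (Fin N) (Fin N) ℝ) : ℝ :=
  sSup {r : ℝ | ∃ v : Fin N → ℝ, v ≠ 0 ∧ r = (v ⬝ᵥ A.mulVec v) / (v ⬝ᵥ B.mulVec v)}

lemma dot_le_specNorm {N : ℕ} (M : Matrix (Fin N) (Fin N) ℝ) (v : Fin N → ℝ) :
    |v ⬝ᵥ M *ᵥ v| ≤ specNorm M * ∑ i, v i ^ 2 := by
  set x : EuclideanSpace ℝ (Fin N) := (WithLp.equiv 2 _).symm v with hx
  set T := LinearMap.toContinuousLinearMap (Matrix.toEuclideanLin M) with hT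
  have h1 : v ⬝ᵥ M *ᵥ v = (inner ℝ x (T x) : ℝ) := by
    rw [EuclideanSpace.inner_eq_star_dotProduct]
    simp [hx, hT, dotProduct_comm]
  have h2 : ‖x‖ ^ 2 = ∑ i, v i ^ 2 := by
    rw [EuclideanSpace.norm_eq, Real.sq_sqrt (by positivity)]
    simp [hx, sq_abs]
  calc |v ⬝ᵥ M *ᵥ v| = |(inner ℝ x (T x) : ℝ)| := by rw [h1]
    _ ≤ ‖x‖ * ‖T x‖ := abs_real_inner_le_norm x (T x)
    _ ≤ ‖x‖ * (‖T‖ * ‖x‖) := by gcongr; exact T.le_opNorm x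
    _ = specNorm M * ∑ i, v i ^ 2 := by rw [← h2, specNorm]; ring

lemma herm_decomp {N : ℕ} {M : Matrix (Fin N) (Fin N) ℝ} (hM : M.IsHermitian) (v : Fin N → ℝ) :
    ∃ w : Fin N → ℝ, v ⬝ᵥ M *ᵥ v = ∑ i, hM.eigenvalues i * w i ^ 2 ∧
      ∑ i, v i ^ 2 = ∑ i, w i ^ 2 := by
  set U : Matrix (Fin N) (Fin N) ℝ := (hM.eigenvectorUnitary : Matrix (Fin N) (Fin N) ℝ) with hU
  have hU2 : U * star U = 1 := Unitary.coe_mul_star_self hM.eigenvectorUnitary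
  have hstar : star U = Uᵀ := by
    rw [Matrix.star_eq_conjTranspose, conjTranspose_eq_transpose_of_trivial]
  refine ⟨star U *ᵥ v, ?_, ?_⟩
  · have hspec := hM.spectral_theorem
    have hdiag : (diagonal (RCLike.ofReal ∘ hM.eigenvalues) : Matrix (Fin N) (Fin N) ℝ)
        = diagonal hM.eigenvalues := by congr 1
    calc v ⬝ᵥ M *ᵥ v
        = v ⬝ᵥ (U * (diagonal hM.eigenvalues * star U)) *ᵥ v := by
          conv_lhs => rw [hspec]
          rw [Unitary.conjStarAlgAut_apply, ← hU, hdiag, mul_assoc]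
      _ = v ⬝ᵥ U *ᵥ (diagonal hM.eigenvalues *ᵥ (star U *ᵥ v)) := by
          rw [← mulVec_mulVec, ← mulVec_mulVec]
      _ = (star U *ᵥ v) ⬝ᵥ (diagonal hM.eigenvalues *ᵥ (star U *ᵥ v)) := by
          rw [dotProduct_mulVec v U, ← mulVec_transpose, hstar]
      _ = ∑ i, hM.eigenvalues i * (star U *ᵥ v) i ^ 2 := by
          simp [dotProduct, mulVec_diagonal, sq]
          apply Finset.sum_congr rfl; intro i _; ring
  · calc ∑ i, v i ^ 2 = v ⬝ᵥ v := by simp [dotProduct, sq]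
      _ = v ⬝ᵥ (U * star U) *ᵥ v := by rw [hU2, one_mulVec]
      _ = (star U *ᵥ v) ⬝ᵥ (star U *ᵥ v) := by
          rw [← mulVec_mulVec, dotProduct_mulVec v U, ← mulVec_transpose, hstar]
      _ = ∑ i, (star U *ᵥ v) i ^ 2 := by simp [dotProduct, sq]

lemma sum_sq_pos {N : ℕ} {v : Fin N → ℝ} (hv : v ≠ 0) : 0 < ∑ i, v i ^ 2 := by
  obtain ⟨i, hi⟩ := Function.ne_iff.mp hv
  exact Finset.sum_pos' (fun j _ => sq_nonneg _)
    ⟨i, Finset.mem_univ i, pow_pos (abs_pos.mpr hi) 2 |>.trans_eq (by rw [sq_abs])⟩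

lemma inf_eig_pos {N : ℕ} (hN : 0 < N) {B : Matrix (Fin N) (Fin N) ℝ} (hB : B.PosDef) :
    0 < ⨅ i, hB.1.eigenvalues i := by
  haveI : Nonempty (Fin N) := ⟨⟨0, hN⟩⟩
  obtain ⟨i, hi⟩ := exists_eq_ciInf_of_finite (f := hB.1.eigenvalues)
  rw [← hi]
  exact hB.eigenvalues_pos i

lemma coercive {N : ℕ} {B : Matrix (Fin N) (Fin N) ℝ} (hB : B.PosDef) (v : Fin N → ℝ) :
    (⨅ i, hB.1.eigenvalues i) * ∑ i, v i ^ 2 ≤ v ⬝ᵥ B *ᵥ v := by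
  obtain ⟨w, h1, h2⟩ := herm_decomp hB.1 v
  rw [h1, h2, Finset.mul_sum]
  apply Finset.sum_le_sum
  intro i _
  have h := ciInf_le (Finite.bddBelow_range hB.1.eigenvalues) i
  nlinarith [sq_nonneg (w i)]

/-- Stability of the largest generalized eigenvalue under perturbation of
the positive definite matrix. -/
theorem genLamMax_stability {N : ℕ} (hN : 0 < N) (ε : ℝ)
    (LY LZ LZt : Matrix (Fin N) (Fin N) ℝ)
    (hY : LY.PosSemidef) (hZ : LZ.PosDef) (hZt : LZt.PosDef)
    (hpert : specNorm (LZt - LZ) ≤ ε) :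
    |genLamMax LY LZt - genLamMax LY LZ| ≤
      ε * specNorm LY / ((⨅ i, hZ.1.eigenvalues i) * ⨅ i, hZt.1.eigenvalues i) := by
  haveI : Nonempty (Fin N) := ⟨⟨0, hN⟩⟩
  set μ₁ := ⨅ i, hZ.1.eigenvalues i with hμ₁
  set μ₂ := ⨅ i, hZt.1.eigenvalues i with hμ₂
  have hμ₁p : 0 < μ₁ := inf_eig_pos hN hZ
  have hμ₂p : 0 < μ₂ := inf_eig_pos hN hZt
  have hεnn : 0 ≤ ε := le_trans (norm_nonneg _) hpert
  have hYnn : 0 ≤ specNorm LY := norm_nonneg _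
  set c := ε * specNorm LY / (μ₁ * μ₂) with hc
  have hcnn : 0 ≤ c := by positivity
  -- per-vector facts
  have ha0 : ∀ v : Fin N → ℝ, 0 ≤ v ⬝ᵥ LY *ᵥ v := by
    intro v
    have := hY.dotProduct_mulVec_nonneg v
    simpa using this
  have haU : ∀ v : Fin N → ℝ, v ⬝ᵥ LY *ᵥ v ≤ specNorm LY * ∑ i, v i ^ 2 :=
    fun v => le_trans (le_abs_self _) (dot_le_specNorm LY v)
  have key : ∀ v : Fin N → ℝ, v ≠ 0 →
      |(v ⬝ᵥ LY *ᵥ v) / (v ⬝ᵥ LZt *ᵥ v) - (v ⬝ᵥ LY *ᵥ v) / (v ⬝ᵥ LZ *ᵥ v)| ≤ c := by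
    intro v hv
    set s := ∑ i, v i ^ 2 with hs
    have hsp : 0 < s := sum_sq_pos hv
    have hb1 : μ₁ * s ≤ v ⬝ᵥ LZ *ᵥ v := coercive hZ v
    have hb2 : μ₂ * s ≤ v ⬝ᵥ LZt *ᵥ v := coercive hZt v
    have hb1p : 0 < v ⬝ᵥ LZ *ᵥ v := lt_of_lt_of_le (by positivity) hb1
    have hb2p : 0 < v ⬝ᵥ LZt *ᵥ v := lt_of_lt_of_le (by positivity) hb2
    have hd : |v ⬝ᵥ LZt *ᵥ v - v ⬝ᵥ LZ *ᵥ v| ≤ ε * s := by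
      have h := dot_le_specNorm (LZt - LZ) v
      have he : v ⬝ᵥ (LZt - LZ) *ᵥ v = v ⬝ᵥ LZt *ᵥ v - v ⬝ᵥ LZ *ᵥ v := by
        rw [sub_mulVec, dotProduct_sub]
      rw [he] at h
      exact h.trans (by nlinarith)
    rw [div_sub_div _ _ hb2p.ne' hb1p.ne', abs_div, abs_of_pos (mul_pos hb2p hb1p)]
    have hnum : |v ⬝ᵥ LY *ᵥ v * (v ⬝ᵥ LZ *ᵥ v) - v ⬝ᵥ LZt *ᵥ v * (v ⬝ᵥ LY *ᵥ v)|
        ≤ ε * specNorm LY * s ^ 2 := by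
      have heq : v ⬝ᵥ LY *ᵥ v * (v ⬝ᵥ LZ *ᵥ v) - v ⬝ᵥ LZt *ᵥ v * (v ⬝ᵥ LY *ᵥ v)
          = (v ⬝ᵥ LY *ᵥ v) * ((v ⬝ᵥ LZ *ᵥ v) - (v ⬝ᵥ LZt *ᵥ v)) := by ring
      rw [heq, abs_mul, abs_of_nonneg (ha0 v), abs_sub_comm]
      calc (v ⬝ᵥ LY *ᵥ v) * |v ⬝ᵥ LZt *ᵥ v - v ⬝ᵥ LZ *ᵥ v|
          ≤ (specNorm LY * s) * (ε * s) :=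
            mul_le_mul (haU v) hd (abs_nonneg _) (by positivity)
        _ = ε * specNorm LY * s ^ 2 := by ring
    have hden : μ₁ * μ₂ * s ^ 2 ≤ (v ⬝ᵥ LZt *ᵥ v) * (v ⬝ᵥ LZ *ᵥ v) := by
      have hm := mul_le_mul hb2 hb1 (by positivity) hb2p.le
      nlinarith [hm]
    calc |v ⬝ᵥ LY *ᵥ v * (v ⬝ᵥ LZ *ᵥ v) - v ⬝ᵥ LZt *ᵥ v * (v ⬝ᵥ LY *ᵥ v)|
          / ((v ⬝ᵥ LZt *ᵥ v) * (v ⬝ᵥ LZ *ᵥ v))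
        ≤ (ε * specNorm LY * s ^ 2) / (μ₁ * μ₂ * s ^ 2) :=
          div_le_div₀ (by positivity) hnum (by positivity) hden
      _ = c := by rw [hc]; field_simp
  -- the Rayleigh-quotient sets
  have hne : ∀ B : Matrix (Fin N) (Fin N) ℝ,
      {r : ℝ | ∃ v : Fin N → ℝ, v ≠ 0 ∧ r = (v ⬝ᵥ LY.mulVec v) / (v ⬝ᵥ B.mulVec v)}.Nonempty := by
    intro B
    refine ⟨_, Pi.single ⟨0, hN⟩ 1, ?_, rfl⟩
    intro h
    have := congrFun h ⟨0, hN⟩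
    simp at this
  have hbdd : ∀ (B : Matrix (Fin N) (Fin N) ℝ) (hB : B.PosDef),
      BddAbove {r : ℝ | ∃ v : Fin N → ℝ, v ≠ 0 ∧ r = (v ⬝ᵥ LY.mulVec v) / (v ⬝ᵥ B.mulVec v)} := by
    intro B hB
    refine ⟨specNorm LY / (⨅ i, hB.1.eigenvalues i), ?_⟩
    rintro r ⟨v, hv, rfl⟩
    have hsp : 0 < ∑ i, v i ^ 2 := sum_sq_pos hv
    have hμp : 0 < ⨅ i, hB.1.eigenvalues i := inf_eig_pos hN hB
    have hb : (⨅ i, hB.1.eigenvalues i) * ∑ i, v i ^ 2 ≤ v ⬝ᵥ B *ᵥ v := coercive hB v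
    have hbp : 0 < v ⬝ᵥ B *ᵥ v := lt_of_lt_of_le (by positivity) hb
    calc (v ⬝ᵥ LY *ᵥ v) / (v ⬝ᵥ B *ᵥ v)
        ≤ (specNorm LY * ∑ i, v i ^ 2) / ((⨅ i, hB.1.eigenvalues i) * ∑ i, v i ^ 2) :=
          div_le_div₀ (by positivity) (haU v) (by positivity) hb
      _ = specNorm LY / (⨅ i, hB.1.eigenvalues i) := by
          rw [mul_div_mul_right _ _ hsp.ne']
  have h12 : genLamMax LY LZt - genLamMax LY LZ ≤ c := by
    rw [sub_le_iff_le_add, genLamMax]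
    apply csSup_le (hne LZt)
    rintro r ⟨v, hv, rfl⟩
    have h1 := (abs_le.mp (key v hv)).2
    have h2 : (v ⬝ᵥ LY.mulVec v) / (v ⬝ᵥ LZ.mulVec v) ≤ genLamMax LY LZ :=
      le_csSup (hbdd LZ hZ) ⟨v, hv, rfl⟩
    linarith
  have h21 : genLamMax LY LZ - genLamMax LY LZt ≤ c := by
    rw [sub_le_iff_le_add, genLamMax]
    apply csSup_le (hne LZ)
    rintro r ⟨v, hv, rfl⟩
    have h1 := (abs_le.mp (key v hv)).1
    have h2 : (v ⬝ᵥ LY.mulVec v) / (v ⬝ᵥ LZt.mulVec v) ≤ genLamMax LY LZt :=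
      le_csSup (hbdd LZt hZt) ⟨v, hv, rfl⟩
    linarith
  rw [abs_sub_le_iff]
  exact ⟨h12, h21⟩
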